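/- The maps C ↦ X_C (sending a phylogenetic set of cuts to the crossing relation {(i,j|k,l) : ∃(A|B)∈C, i,j∈A, k,l∈B}) and X ↦ C_X (sending a phylogenetic crossing relation to the set of cuts compatible with X) are mutually inverse bijections between phylogenetic sets of cuts and phylogenetic crossing relations on N. -/

import Mathlib

open Set

/-- `X` is a crossing relation on `α`: a set of unordered pairs of disjoint two-element
subsets of `α`, encoded as a quaternary relation that forces the four entries to be
pairwise distinct, and is invariant under swapping `i` with `j`, swapping `k` with `l`,
and swapping the pair `{i,j}` with the pair `{k,l}`. -/
def IsCrossRel {α : Type*} (X : α → α → α → α → Prop) : Prop :=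
  (∀ i j k l, X i j k l → i ≠ j ∧ i ≠ k ∧ i ≠ l ∧ j ≠ k ∧ j ≠ l ∧ k ≠ l) ∧
  (∀ i j k l, X i j k l → X j i k l) ∧
  (∀ i j k l, X i j k l → X i j l k) ∧
  (∀ i j k l, X i j k l → X k l i j)

/-- A phylogenetic crossing relation: a crossing relation satisfying axioms
(X1), (X2), (X3). -/
def IsPhyloX {α : Type*} (X : α → α → α → α → Prop) : Prop :=
  IsCrossRel X ∧
  (∀ i j k l, X i j k l → ¬ X i k j l) ∧
  (∀ i j k l m, X i j k l → X i j k m → l ≠ m → X i j l m) ∧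
  (∀ i j k l m, X i j k l → m ≠ i → m ≠ j → m ≠ k → m ≠ l → (X i j k m ∨ X i m k l))

/-- A cut `(A | Aᶜ)` is compatible with `X` if `(a,b | c,d) ∈ X` for all distinct
`a, b ∈ A` and all distinct `c, d ∈ Aᶜ`. -/
def Compatible {α : Type*} (X : α → α → α → α → Prop) (A : Set α) : Prop :=
  ∀ a b c d : α, a ∈ A → b ∈ A → a ≠ b → c ∉ A → d ∉ A → c ≠ d → X a b c d

/-- The set of cuts (represented by their clusters) compatible with `X`. -/
def CX {α : Type*} (X : α → α → α → α → Prop) : Set (Set α) :=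
  {A : Set α | 2 ≤ A.ncard ∧ 2 ≤ Aᶜ.ncard ∧ Compatible X A}

/-- A phylogenetic set of cuts of `α`. -/
def IsCutSet {α : Type*} (C : Set (Set α)) : Prop :=
  (∀ A ∈ C, 2 ≤ A.ncard ∧ 2 ≤ Aᶜ.ncard ∧ Aᶜ ∈ C) ∧
  ∀ A ∈ C, ∀ B ∈ C, A ∩ B = ∅ ∨ A ∩ Bᶜ = ∅ ∨ Aᶜ ∩ B = ∅ ∨ Aᶜ ∩ Bᶜ = ∅

/-- The crossing relation induced by a set of cuts. -/
def XC {α : Type*} (C : Set (Set α)) (i j k l : α) : Prop :=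
  i ≠ j ∧ i ≠ k ∧ i ≠ l ∧ j ≠ k ∧ j ≠ l ∧ k ≠ l ∧
    ∃ A ∈ C, i ∈ A ∧ j ∈ A ∧ k ∉ A ∧ l ∉ A

section Helpers

variable {α : Type*}

private lemma two_le_ncard' [Fintype α] {s : Set α} {a b : α} (ha : a ∈ s) (hb : b ∈ s)
    (hab : a ≠ b) : 2 ≤ s.ncard :=
  (Set.one_lt_ncard s.toFinite).mpr ⟨a, ha, b, hb, hab⟩

private lemma exists_two [Fintype α] {s : Set α} (h : 2 ≤ s.ncard) :
    ∃ a ∈ s, ∃ b ∈ s, a ≠ b :=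
  (Set.one_lt_ncard s.toFinite).mp h

private lemma cut_chain {C : Set (Set α)} (hC : IsCutSet C) {B B' : Set α}
    (hB : B ∈ C) (hB' : B' ∈ C) {a c : α} (haB : a ∈ B) (haB' : a ∈ B')
    (hcB : c ∉ B) (hcB' : c ∉ B') : B ⊆ B' ∨ B' ⊆ B := by
  rcases hC.2 B hB B' hB' with h | h | h | h
  · exact absurd (h ▸ Set.mem_inter haB haB') (Set.notMem_empty a)
  · exact Or.inl fun x hx => by_contra fun hx' =>
      (Set.notMem_empty x) (h ▸ Set.mem_inter hx hx')
  · exact Or.inr fun x hx => by_contra fun hx' =>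
      (Set.notMem_empty x) (h ▸ Set.mem_inter hx' hx)
  · exact absurd (h ▸ Set.mem_inter hcB hcB') (Set.notMem_empty c)

private lemma build_cut [Fintype α] {X : α → α → α → α → Prop} (hX : IsPhyloX X)
    {i j k l : α} (h : X i j k l) :
    ∃ A ∈ CX X, i ∈ A ∧ j ∈ A ∧ k ∉ A ∧ l ∉ A := by
  obtain ⟨⟨hdist, hs1, hs2, hs3⟩, hX1, hX2, hX3⟩ := hX
  obtain ⟨hij, hik, hil, hjk, hjl, hkl⟩ := hdist _ _ _ _ h
  set A : Set α := {m | m = i ∨ m = j ∨ X i m k l} with hAdef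
  have hiA : i ∈ A := Or.inl rfl
  have hjA : j ∈ A := Or.inr (Or.inl rfl)
  have hkA : k ∉ A := by
    rintro (rfl | rfl | hx)
    · exact hik rfl
    · exact hjk rfl
    · exact (hdist _ _ _ _ hx).2.2.2.1 rfl
  have hlA : l ∉ A := by
    rintro (rfl | rfl | hx)
    · exact hil rfl
    · exact hjl rfl
    · exact (hdist _ _ _ _ hx).2.2.2.2.1 rfl
  have hcne : ∀ c, c ∉ A → c ≠ i ∧ c ≠ j ∧ ¬ X i c k l := fun c hc =>
    ⟨fun e => hc (Or.inl e), fun e => hc (Or.inr (Or.inl e)),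
      fun e => hc (Or.inr (Or.inr e))⟩
  have G : ∀ p, p ∈ A → X i p k l → ∀ c d, c ∉ A → d ∉ A → c ≠ d → X i p c d := by
    intro p hp hXp c d hc hd hcd
    have key : ∀ e, e ∉ A → e ≠ k → e ≠ l → X i p k e ∧ X i p l e := by
      intro e he hek hel
      obtain ⟨hei, _, heX⟩ := hcne e he
      have hep : e ≠ p := fun hq => he (hq ▸ hp)
      refine ⟨(hX3 i p k l e hXp hei hep hek hel).resolve_right heX, ?_⟩
      exact (hX3 i p l k e (hs2 _ _ _ _ hXp) hei hep hel hek).resolve_right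
        (fun hq => heX (hs2 _ _ _ _ hq))
    by_cases hck : c = k
    · subst hck
      by_cases hdl : d = l
      · subst hdl; exact hXp
      · exact (key d hd (fun e => hcd e.symm) hdl).1
    · by_cases hcl : c = l
      · subst hcl
        by_cases hdk : d = k
        · subst hdk; exact hs2 _ _ _ _ hXp
        · exact (key d hd hdk (fun e => hcd e.symm)).2
      · by_cases hdk : d = k
        · subst hdk; exact hs2 _ _ _ _ (key c hc hck hcl).1
        · by_cases hdl : d = l
          · subst hdl; exact hs2 _ _ _ _ (key c hc hck hcl).2
          · exact hX2 i p k c d (key c hc hck hcl).1 (key d hd hdk hdl).1 hcd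
  have hcomp : Compatible X A := by
    intro a b c d haA hbA hab hc hd hcd
    have Gi : ∀ p, p ∈ A → p ≠ i → X i p c d := by
      intro p hp hpi
      rcases hp with rfl | rfl | hXp
      · exact absurd rfl hpi
      · exact G _ hjA h c d hc hd hcd
      · exact G _ (Or.inr (Or.inr hXp)) hXp c d hc hd hcd
    by_cases hai : a = i
    · subst hai; exact Gi b hbA (Ne.symm hab)
    · by_cases hbi : b = i
      · subst hbi; exact hs1 _ _ _ _ (Gi a haA hai)
      · exact hs3 _ _ _ _ (hX2 c d i a b (hs3 _ _ _ _ (Gi a haA hai))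
          (hs3 _ _ _ _ (Gi b hbA hbi)) hab)
  exact ⟨A, ⟨two_le_ncard' hiA hjA hij,
    two_le_ncard' (show k ∈ Aᶜ from hkA) (show l ∈ Aᶜ from hlA) hkl, hcomp⟩,
    hiA, hjA, hkA, hlA⟩

end Helpers

/-- the maps `C ↦ X_C` and `X ↦ C_X` are mutually inverse bijections
between phylogenetic sets of cuts and phylogenetic crossing relations on `α`. -/
theorem stmt15 {α : Type*} [Fintype α] (hcard : 3 ≤ Fintype.card α) :
    (∀ C : Set (Set α), IsCutSet C → IsPhyloX (XC C) ∧ CX (XC C) = C) ∧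
    (∀ X : α → α → α → α → Prop, IsPhyloX X →
      IsCutSet (CX X) ∧ ∀ i j k l : α, XC (CX X) i j k l ↔ X i j k l) := by
  constructor
  · -- Direction 1
    intro C hC
    constructor
    · -- IsPhyloX (XC C)
      refine ⟨⟨?_, ?_, ?_, ?_⟩, ?_, ?_, ?_⟩
      · rintro i j k l ⟨h1, h2, h3, h4, h5, h6, -⟩
        exact ⟨h1, h2, h3, h4, h5, h6⟩
      · rintro i j k l ⟨h1, h2, h3, h4, h5, h6, A, hA, hi, hj, hk, hl⟩
        exact ⟨h1.symm, h4, h5, h2, h3, h6, A, hA, hj, hi, hk, hl⟩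
      · rintro i j k l ⟨h1, h2, h3, h4, h5, h6, A, hA, hi, hj, hk, hl⟩
        exact ⟨h1, h3, h2, h5, h4, h6.symm, A, hA, hi, hj, hl, hk⟩
      · rintro i j k l ⟨h1, h2, h3, h4, h5, h6, A, hA, hi, hj, hk, hl⟩
        exact ⟨h6, h2.symm, h4.symm, h3.symm, h5.symm, h1, Aᶜ,
          (hC.1 A hA).2.2, hk, hl, fun e => e hi, fun e => e hj⟩
      · -- (X1)
        rintro i j k l ⟨-, -, -, -, -, -, A, hA, hiA, hjA, hkA, hlA⟩
          ⟨-, -, -, -, -, -, B, hB, hiB, hkB, hjB, hlB⟩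
        rcases hC.2 A hA B hB with h | h | h | h
        · exact (Set.notMem_empty i) (h ▸ Set.mem_inter hiA hiB)
        · exact (Set.notMem_empty j) (h ▸ Set.mem_inter hjA hjB)
        · exact (Set.notMem_empty k) (h ▸ Set.mem_inter hkA hkB)
        · exact (Set.notMem_empty l) (h ▸ Set.mem_inter hlA hlB)
      · -- (X2)
        rintro i j k l m ⟨h1, h2, h3, h4, h5, h6, A, hA, hiA, hjA, hkA, hlA⟩
          ⟨-, -, h3', -, h5', -, B, hB, hiB, hjB, hkB, hmB⟩ hlm
        refine ⟨h1, h3, h3', h5, h5', hlm, ?_⟩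
        rcases cut_chain hC hA hB hiA hiB hkA hkB with hsub | hsub
        · exact ⟨A, hA, hiA, hjA, hlA, fun hm => hmB (hsub hm)⟩
        · exact ⟨B, hB, hiB, hjB, fun hl' => hlA (hsub hl'), hmB⟩
      · -- (X3)
        rintro i j k l m ⟨h1, h2, h3, h4, h5, h6, A, hA, hiA, hjA, hkA, hlA⟩ hmi hmj hmk hml
        by_cases hm : m ∈ A
        · exact Or.inr ⟨Ne.symm hmi, h2, h3, hmk, hml, h6, A, hA, hiA, hm, hkA, hlA⟩
        · exact Or.inl ⟨h1, h2, Ne.symm hmi, h4, Ne.symm hmj, Ne.symm hmk, A, hA,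
            hiA, hjA, hkA, hm⟩
    · -- CX (XC C) = C
      ext A
      simp only [CX, Set.mem_setOf_eq]
      constructor
      · rintro ⟨h2A, h2Ac, hcomp⟩
        obtain ⟨a, haA, b, hbA, hab⟩ := exists_two h2A
        obtain ⟨c, hcA, d, hdA, hcd⟩ := exists_two h2Ac
        have L0 : ∀ x ∈ A, ∀ y, y ∉ A → ∃ B ∈ C, a ∈ B ∧ x ∈ B ∧ c ∉ B ∧ y ∉ B := by
          intro x hx y hy
          by_cases hxa : x = a
          · by_cases hyc : y = c
            · obtain ⟨-, -, -, -, -, -, B, hB, hb1, -, hb3, -⟩ :=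
                hcomp a b c d haA hbA hab hcA hdA hcd
              exact ⟨B, hB, hb1, hxa.symm ▸ hb1, hb3, hyc.symm ▸ hb3⟩
            · obtain ⟨-, -, -, -, -, -, B, hB, hb1, -, hb3, hb4⟩ :=
                hcomp a b c y haA hbA hab hcA hy (fun e => hyc e.symm)
              exact ⟨B, hB, hb1, hxa.symm ▸ hb1, hb3, hb4⟩
          · by_cases hyc : y = c
            · obtain ⟨-, -, -, -, -, -, B, hB, hb1, hb2, hb3, -⟩ :=
                hcomp a x c d haA hx (fun e => hxa e.symm) hcA hdA hcd
              exact ⟨B, hB, hb1, hb2, hb3, hyc.symm ▸ hb3⟩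
            · obtain ⟨-, -, -, -, -, -, B, hB, hb1, hb2, hb3, hb4⟩ :=
                hcomp a x c y haA hx (fun e => hxa e.symm) hcA hy (fun e => hyc e.symm)
              exact ⟨B, hB, hb1, hb2, hb3, hb4⟩
        have L1 : ∀ y, y ∉ A → ∃ M ∈ C, A ⊆ M ∧ c ∉ M ∧ y ∉ M := by
          intro y hy
          have hTne : {B | B ∈ C ∧ a ∈ B ∧ c ∉ B ∧ y ∉ B}.Nonempty := by
            obtain ⟨B, hB, hb1, -, hb3, hb4⟩ := L0 a haA y hy
            exact ⟨B, hB, hb1, hb3, hb4⟩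
          obtain ⟨M, hMT, hmax⟩ := Set.Finite.exists_maximalFor id
            {B | B ∈ C ∧ a ∈ B ∧ c ∉ B ∧ y ∉ B} (Set.toFinite _) hTne
          obtain ⟨hMC, haM, hcM, hyM⟩ := hMT
          refine ⟨M, hMC, ?_, hcM, hyM⟩
          intro x hx
          obtain ⟨B, hB, hb1, hb2, hb3, hb4⟩ := L0 x hx y hy
          rcases cut_chain hC hMC hB haM hb1 hcM hb3 with hs | hs
          · have hMB : M = B := Set.Subset.antisymm hs (hmax ⟨hB, hb1, hb3, hb4⟩ hs)
            exact hMB.symm ▸ hb2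
          · exact hs hb2
        obtain ⟨M0, hM0C, hM0A, hM0c, -⟩ := L1 c hcA
        have hT'ne : {M | M ∈ C ∧ A ⊆ M ∧ c ∉ M}.Nonempty := ⟨M0, hM0C, hM0A, hM0c⟩
        obtain ⟨M, hMT, hmin⟩ := Set.Finite.exists_minimalFor id
          {M | M ∈ C ∧ A ⊆ M ∧ c ∉ M} (Set.toFinite _) hT'ne
        obtain ⟨hMC, hAM, hcM⟩ := hMT
        have hMA : M = A := by
          refine Set.Subset.antisymm ?_ hAM
          intro y hyM
          by_contra hy
          obtain ⟨M', hM'C, hAM', hcM', hyM'⟩ := L1 y hy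
          rcases cut_chain hC hMC hM'C (hAM haA) (hAM' haA) hcM hcM' with hs | hs
          · exact hyM' (hs hyM)
          · have hMM : M = M' := Set.Subset.antisymm (hmin ⟨hM'C, hAM', hcM'⟩ hs) hs
            exact hyM' (hMM ▸ hyM)
        exact hMA ▸ hMC
      · intro hA
        obtain ⟨h2A, h2Ac, -⟩ := hC.1 A hA
        refine ⟨h2A, h2Ac, ?_⟩
        intro x y u v hx hy hxy hu hv huv
        exact ⟨hxy, fun e => hu (e ▸ hx), fun e => hv (e ▸ hx), fun e => hu (e ▸ hy),
          fun e => hv (e ▸ hy), huv, A, hA, hx, hy, hu, hv⟩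
  · -- Direction 2
    intro X hXp
    obtain ⟨⟨hdist, hs1, hs2, hs3⟩, hX1, hX2, hX3⟩ := hXp
    constructor
    · -- IsCutSet (CX X)
      constructor
      · intro A hA
        obtain ⟨h2, h2c, hcomp⟩ := hA
        refine ⟨h2, h2c, h2c, by rwa [compl_compl], ?_⟩
        intro a b c d ha hb hab hc hd hcd
        exact hs3 _ _ _ _ (hcomp c d a b (not_not.mp hc) (not_not.mp hd) hcd ha hb hab)
      · intro A hA B hB
        obtain ⟨-, -, hcompA⟩ := hA
        obtain ⟨-, -, hcompB⟩ := hB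
        by_contra hcon
        push_neg at hcon
        obtain ⟨h1, h2, h3, h4⟩ := hcon
        obtain ⟨i, hiA, hiB⟩ := h1
        obtain ⟨j, hjA, hjB⟩ := h2
        obtain ⟨k, hkA, hkB⟩ := h3
        obtain ⟨l, hlA, hlB⟩ := h4
        exact hX1 i j k l
          (hcompA i j k l hiA hjA (fun e => hjB (e ▸ hiB)) hkA hlA (fun e => hlB (e ▸ hkB)))
          (hcompB i k j l hiB hkB (fun e => hkA (e ▸ hiA)) hjB hlB (fun e => hlA (e ▸ hjA)))
    · -- XC (CX X) = X
      intro i j k l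
      constructor
      · rintro ⟨h1, -, -, -, -, h6, A, hA, hi, hj, hk, hl⟩
        exact hA.2.2 i j k l hi hj h1 hk hl h6
      · intro h
        obtain ⟨A, hA, hi, hj, hk, hl⟩ :=
          build_cut ⟨⟨hdist, hs1, hs2, hs3⟩, hX1, hX2, hX3⟩ h
        obtain ⟨d1, d2, d3, d4, d5, d6⟩ := hdist _ _ _ _ h
        exact ⟨d1, d2, d3, d4, d5, d6, A, hA, hi, hj, hk, hl⟩
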